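/- Let Q₁,…,Q_n be jointly independent random variables with values in [0,1], and let N ⊆ {1,…,n} be a set of indices such that Pr(Q_i ≤ x) ≤ x for all x ∈ [0,1] and every i ∈ N. Fix λ ∈ (0,1) and α ∈ (0,1). Then Pr(there exists i ∈ N with Q_i ≤ min(λ, α(1−λ)/(1 + #{j ∈ {1,…,n} : Q_j > λ}))) ≤ α. Equivalently, the Bonferroni procedure using the plug-in estimator π̂₀ = (1 + #{j : Q_j > λ})/(n(1−λ)), which rejects i when Q_i ≤ min(λ, α/(n·π̂₀)), has probability at most α of rejecting any index in N. (The key single-family inequality established in the proof of Theorem 3.) -/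

import Mathlib

open MeasureTheory ProbabilityTheory

open Finset
open scoped Classical ENNReal

section PluginAux

variable {Ω : Type*} [MeasurableSpace Ω]

lemma plugin_meas_card {n : ℕ} (Q : Fin n → Ω → ℝ) (hQm : ∀ i, Measurable (Q i)) (lam : ℝ)
    (T : Finset (Fin n)) :
    Measurable (fun ω => ((T.filter (fun j => lam < Q j ω)).card : ℕ)) := by
  simp only [Finset.card_filter]
  exact Finset.measurable_sum _ fun j _ => Measurable.ite
    (measurableSet_lt measurable_const (hQm j)) measurable_const measurable_const

lemma plugin_count_sum (μ : Measure Ω) {n : ℕ} (Q : Fin n → Ω → ℝ)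
    (hQm : ∀ i, Measurable (Q i)) (lam : ℝ) (N : Finset (Fin n)) (m : ℕ) :
    ∑ i ∈ N, μ ((fun ω => (N.filter (fun j => lam < Q j ω)).card) ⁻¹' {m}
        ∩ Q i ⁻¹' Set.Ioi lam)
      = (m : ℝ≥0∞) * μ ((fun ω => (N.filter (fun j => lam < Q j ω)).card) ⁻¹' {m}) := by
  set B : Set Ω := (fun ω => (N.filter (fun j => lam < Q j ω)).card) ⁻¹' {m} with hBdef
  have hB : MeasurableSet B := (plugin_meas_card Q hQm lam N) (measurableSet_singleton m)
  have hmi : ∀ i : Fin n, MeasurableSet (B ∩ Q i ⁻¹' Set.Ioi lam) :=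
    fun i => hB.inter ((hQm i) measurableSet_Ioi)
  have h1 : ∀ i ∈ N, μ (B ∩ Q i ⁻¹' Set.Ioi lam)
      = ∫⁻ ω, (B ∩ Q i ⁻¹' Set.Ioi lam).indicator (fun _ => (1:ℝ≥0∞)) ω ∂μ := fun i _ => by
    rw [lintegral_indicator_const (hmi i), one_mul]
  rw [Finset.sum_congr rfl h1,
    ← lintegral_finset_sum _ (fun i _ => measurable_const.indicator (hmi i))]
  have hpt : ∀ ω, (∑ i ∈ N, (B ∩ Q i ⁻¹' Set.Ioi lam).indicator (fun _ => (1:ℝ≥0∞)) ω)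
      = B.indicator (fun _ => (m : ℝ≥0∞)) ω := by
    intro ω
    by_cases hω : ω ∈ B
    · have hm : (N.filter (fun j => lam < Q j ω)).card = m := hω
      simp only [Set.indicator_apply, Set.mem_inter_iff, hω, true_and, Set.mem_preimage,
        Set.mem_Ioi, if_true]
      rw [Finset.sum_boole, hm]
    · simp only [Set.indicator_apply, Set.mem_inter_iff, hω, false_and, if_false,
        Finset.sum_const_zero]
  rw [lintegral_congr hpt, lintegral_indicator_const hB]

lemma plugin_aux_indep (μ : Measure Ω) {n : ℕ} (Q : Fin n → Ω → ℝ)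
    (hQm : ∀ i, Measurable (Q i)) (hiid : iIndepFun Q μ)
    (lam : ℝ) (i : Fin n) (T : Finset (Fin n)) (hi : i ∉ T) :
    IndepFun (Q i) (fun ω => ((T.filter (fun j => lam < Q j ω)).card : ℕ)) μ := by
  have h := hiid.indepFun_finset {i} T (by simp [Finset.disjoint_left, hi]) hQm
  let g1 : (∀ _ : ({i} : Finset (Fin n)), ℝ) → ℝ := fun v => v ⟨i, Finset.mem_singleton_self i⟩
  let g2 : (∀ _ : (T : Finset (Fin n)), ℝ) → ℕ :=
    fun v => ∑ j ∈ T.attach, if lam < v j then 1 else 0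
  have hg1 : Measurable g1 := measurable_pi_apply _
  have hg2 : Measurable g2 := Finset.measurable_sum _ fun j _ => Measurable.ite
    (measurableSet_lt measurable_const (measurable_pi_apply _)) measurable_const measurable_const
  have h2 := h.comp hg1 hg2
  convert h2 using 1
  · rfl
  funext ω
  rw [Finset.card_filter, ← Finset.sum_attach T (fun j => if lam < Q j ω then 1 else 0)]
  rfl

lemma plugin_key_i (μ : Measure Ω) [IsProbabilityMeasure μ] {n : ℕ} (Q : Fin n → Ω → ℝ)
    (hQm : ∀ i, Measurable (Q i)) (hiid : iIndepFun Q μ)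
    (N : Finset (Fin n))
    (hunif : ∀ i ∈ N, ∀ x ∈ Set.Icc (0:ℝ) 1, μ {ω | Q i ω ≤ x} ≤ ENNReal.ofReal x)
    (lam α : ℝ) (hl0 : 0 < lam) (hl1 : lam < 1) (ha0 : 0 < α)
    (i : Fin n) (hiN : i ∈ N) :
    μ {ω | Q i ω ≤ min lam (α * (1-lam) /
        (1 + (((N.erase i).filter (fun j => lam < Q j ω)).card : ℝ)))}
      ≤ ENNReal.ofReal α * ∑ k ∈ Finset.range (n+1),
          μ ((fun ω => (N.filter (fun j => lam < Q j ω)).card) ⁻¹' {k+1} ∩ Q i ⁻¹' Set.Ioi lam)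
            * ENNReal.ofReal (1/(1+(k:ℝ))) := by
  have h1l : (0:ℝ) < 1 - lam := by linarith
  set t : ℕ → ℝ := fun k => min lam (α * (1-lam) / (1 + (k:ℝ))) with ht
  set s : Ω → ℕ := fun ω => ((N.erase i).filter (fun j => lam < Q j ω)).card with hs
  have hsm : Measurable s := plugin_meas_card Q hQm lam _
  have htpos : ∀ k, 0 < t k := fun k =>
    lt_min hl0 (by positivity)
  have ht1 : ∀ k, t k ≤ 1 := fun k => (min_le_left _ _).trans hl1.le
  have hsub : {ω | Q i ω ≤ t (s ω)} ⊆
      ⋃ k ∈ Finset.range (n+1), (s ⁻¹' {k} ∩ Q i ⁻¹' Set.Iic (t k)) := by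
    intro ω hω
    have hk : s ω ∈ Finset.range (n+1) := by
      have : s ω ≤ n := le_trans (Finset.card_le_card (Finset.filter_subset _ _))
        (le_trans (Finset.card_le_univ _) (by simp))
      simpa [Finset.mem_range, Nat.lt_succ_iff] using this
    exact Set.mem_biUnion hk ⟨rfl, hω⟩
  have hindep := plugin_aux_indep μ Q hQm hiid lam i (N.erase i) (Finset.notMem_erase i N)
  have hgt : ENNReal.ofReal (1 - lam) ≤ μ (Q i ⁻¹' Set.Ioi lam) := by
    have hcompl : μ (Q i ⁻¹' Set.Iic lam) + μ (Q i ⁻¹' Set.Ioi lam) = 1 := by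
      have : Q i ⁻¹' Set.Ioi lam = (Q i ⁻¹' Set.Iic lam)ᶜ := by
        rw [← Set.preimage_compl, Set.compl_Iic]
      rw [this, measure_add_measure_compl ((hQm i) measurableSet_Iic), measure_univ]
    have hle : μ (Q i ⁻¹' Set.Iic lam) ≤ ENNReal.ofReal lam :=
      hunif i hiN lam ⟨hl0.le, hl1.le⟩
    rw [ENNReal.ofReal_sub _ hl0.le, ENNReal.ofReal_one]
    rw [tsub_le_iff_right]
    calc (1:ℝ≥0∞) = μ (Q i ⁻¹' Set.Iic lam) + μ (Q i ⁻¹' Set.Ioi lam) := hcompl.symm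
      _ ≤ ENNReal.ofReal lam + μ (Q i ⁻¹' Set.Ioi lam) := by gcongr
      _ = μ (Q i ⁻¹' Set.Ioi lam) + ENNReal.ofReal lam := add_comm _ _
  have hterm : ∀ k, μ (s ⁻¹' {k} ∩ Q i ⁻¹' Set.Iic (t k)) ≤
      ENNReal.ofReal α *
        (μ ((fun ω => (N.filter (fun j => lam < Q j ω)).card) ⁻¹' {k+1} ∩ Q i ⁻¹' Set.Ioi lam)
          * ENNReal.ofReal (1/(1+(k:ℝ)))) := by
    intro k
    have hk1 : (0:ℝ) < 1 + (k:ℝ) := by positivity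
    have hprod1 : μ (Q i ⁻¹' Set.Iic (t k) ∩ s ⁻¹' {k})
        = μ (Q i ⁻¹' Set.Iic (t k)) * μ (s ⁻¹' {k}) :=
      hindep.measure_inter_preimage_eq_mul _ _ measurableSet_Iic (measurableSet_singleton k)
    have hprod2 : μ (Q i ⁻¹' Set.Ioi lam ∩ s ⁻¹' {k})
        = μ (Q i ⁻¹' Set.Ioi lam) * μ (s ⁻¹' {k}) :=
      hindep.measure_inter_preimage_eq_mul _ _ measurableSet_Ioi (measurableSet_singleton k)
    have hset : (fun ω => (N.filter (fun j => lam < Q j ω)).card) ⁻¹' {k+1}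
        ∩ Q i ⁻¹' Set.Ioi lam = Q i ⁻¹' Set.Ioi lam ∩ s ⁻¹' {k} := by
      ext ω
      simp only [Set.mem_inter_iff, Set.mem_preimage, Set.mem_singleton_iff, Set.mem_Ioi]
      constructor
      · rintro ⟨hcard, hgt'⟩
        refine ⟨hgt', ?_⟩
        have hins : N.filter (fun j => lam < Q j ω)
            = insert i ((N.erase i).filter (fun j => lam < Q j ω)) := by
          ext j
          simp only [Finset.mem_filter, Finset.mem_insert, Finset.mem_erase]
          constructor
          · rintro ⟨hjN, hj⟩
            by_cases hji : j = i
            · exact Or.inl hji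
            · exact Or.inr ⟨⟨hji, hjN⟩, hj⟩
          · rintro (rfl | ⟨⟨_, hjN⟩, hj⟩)
            · exact ⟨hiN, hgt'⟩
            · exact ⟨hjN, hj⟩
        have hni : i ∉ (N.erase i).filter (fun j => lam < Q j ω) := by
          simp [Finset.mem_filter]
        rw [hins, Finset.card_insert_of_notMem hni] at hcard
        exact Nat.add_right_cancel hcard
      · rintro ⟨hgt', hcard⟩
        refine ⟨?_, hgt'⟩
        have hins : N.filter (fun j => lam < Q j ω)
            = insert i ((N.erase i).filter (fun j => lam < Q j ω)) := by
          ext j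
          simp only [Finset.mem_filter, Finset.mem_insert, Finset.mem_erase]
          constructor
          · rintro ⟨hjN, hj⟩
            by_cases hji : j = i
            · exact Or.inl hji
            · exact Or.inr ⟨⟨hji, hjN⟩, hj⟩
          · rintro (rfl | ⟨⟨_, hjN⟩, hj⟩)
            · exact ⟨hiN, hgt'⟩
            · exact ⟨hjN, hj⟩
        have hni : i ∉ (N.erase i).filter (fun j => lam < Q j ω) := by
          simp [Finset.mem_filter]
        rw [hins, Finset.card_insert_of_notMem hni]
        exact congrArg (· + 1) hcard
    calc μ (s ⁻¹' {k} ∩ Q i ⁻¹' Set.Iic (t k))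
        = μ (Q i ⁻¹' Set.Iic (t k)) * μ (s ⁻¹' {k}) := by rw [Set.inter_comm]; exact hprod1
      _ ≤ ENNReal.ofReal (t k) * μ (s ⁻¹' {k}) := by
            gcongr
            exact hunif i hiN (t k) ⟨(htpos k).le, ht1 k⟩
      _ ≤ ENNReal.ofReal (α * (1-lam) / (1 + (k:ℝ))) * μ (s ⁻¹' {k}) := by
            gcongr
            exact min_le_right _ _
      _ = ENNReal.ofReal α * (ENNReal.ofReal (1-lam)
            * (μ (s ⁻¹' {k}) * ENNReal.ofReal (1/(1+(k:ℝ))))) := by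
            rw [show α * (1-lam) / (1 + (k:ℝ)) = α * ((1-lam) * (1/(1+(k:ℝ)))) by ring,
              ENNReal.ofReal_mul ha0.le, ENNReal.ofReal_mul h1l.le]
            ring
      _ ≤ ENNReal.ofReal α * (μ (Q i ⁻¹' Set.Ioi lam)
            * (μ (s ⁻¹' {k}) * ENNReal.ofReal (1/(1+(k:ℝ))))) := by gcongr
      _ = ENNReal.ofReal α *
            (μ ((fun ω => (N.filter (fun j => lam < Q j ω)).card) ⁻¹' {k+1}
              ∩ Q i ⁻¹' Set.Ioi lam) * ENNReal.ofReal (1/(1+(k:ℝ)))) := by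
            rw [hset, hprod2]; ring
  calc μ {ω | Q i ω ≤ min lam (α * (1-lam) /
        (1 + (((N.erase i).filter (fun j => lam < Q j ω)).card : ℝ)))}
      ≤ μ (⋃ k ∈ Finset.range (n+1), (s ⁻¹' {k} ∩ Q i ⁻¹' Set.Iic (t k))) :=
        measure_mono hsub
    _ ≤ ∑ k ∈ Finset.range (n+1), μ (s ⁻¹' {k} ∩ Q i ⁻¹' Set.Iic (t k)) :=
        measure_biUnion_finset_le _ _
    _ ≤ ∑ k ∈ Finset.range (n+1), ENNReal.ofReal α *
          (μ ((fun ω => (N.filter (fun j => lam < Q j ω)).card) ⁻¹' {k+1}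
            ∩ Q i ⁻¹' Set.Ioi lam) * ENNReal.ofReal (1/(1+(k:ℝ)))) :=
        Finset.sum_le_sum fun k _ => hterm k
    _ = ENNReal.ofReal α * ∑ k ∈ Finset.range (n+1),
          μ ((fun ω => (N.filter (fun j => lam < Q j ω)).card) ⁻¹' {k+1}
            ∩ Q i ⁻¹' Set.Ioi lam) * ENNReal.ofReal (1/(1+(k:ℝ))) := by
        rw [Finset.mul_sum]

end PluginAux

/-- key single-family inequality in the proof of Theorem 3.
Let `Q₁, …, Q_n` be jointly independent `[0,1]`-valued random variables and `N` a set of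
null indices whose variables are stochastically at least uniform.  For `λ, α ∈ (0,1)`,
the Bonferroni procedure using the plug-in estimator
`π̂₀ = (1 + #{j : Q_j > λ})/(n(1−λ))`, which rejects `i` when
`Q_i ≤ min(λ, α/(n·π̂₀)) = min(λ, α(1−λ)/(1 + #{j : Q_j > λ}))`, has probability at
most `α` of rejecting any index in `N`. -/
theorem plugin_bonferroni_fwer
    {Ω : Type*} [MeasurableSpace Ω] (μ : Measure Ω) [IsProbabilityMeasure μ]
    (n : ℕ) (Q : Fin n → Ω → ℝ) (hQm : ∀ i, Measurable (Q i))
    (hQrange : ∀ i ω, Q i ω ∈ Set.Icc (0:ℝ) 1)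
    (hiid : iIndepFun Q μ)
    (N : Finset (Fin n))
    (hunif : ∀ i ∈ N, ∀ x ∈ Set.Icc (0:ℝ) 1, μ {ω | Q i ω ≤ x} ≤ ENNReal.ofReal x)
    (lam α : ℝ) (hlam : lam ∈ Set.Ioo (0:ℝ) 1) (hα : α ∈ Set.Ioo (0:ℝ) 1) :
    μ {ω | ∃ i ∈ N, Q i ω ≤
        min lam (α * (1 - lam) / (1 + (Nat.card {j : Fin n // lam < Q j ω} : ℝ)))}
      ≤ ENNReal.ofReal α := by
  obtain ⟨hl0, hl1⟩ := hlam
  obtain ⟨ha0, ha1⟩ := hα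
  have h1l : (0:ℝ) < 1 - lam := by linarith
  -- union bound reduction
  have hEsub : {ω | ∃ i ∈ N, Q i ω ≤
      min lam (α * (1 - lam) / (1 + (Nat.card {j : Fin n // lam < Q j ω} : ℝ)))} ⊆
      ⋃ i ∈ N, {ω | Q i ω ≤ min lam (α * (1-lam) /
        (1 + (((N.erase i).filter (fun j => lam < Q j ω)).card : ℝ)))} := by
    rintro ω ⟨i, hiN, hle⟩
    refine Set.mem_biUnion hiN ?_
    have hcard : (Nat.card {j : Fin n // lam < Q j ω})
        = (Finset.univ.filter (fun j => lam < Q j ω)).card := by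
      rw [Nat.card_eq_fintype_card]
      exact Fintype.card_subtype _
    have hmono : (((N.erase i).filter (fun j => lam < Q j ω)).card : ℝ)
        ≤ ((Finset.univ.filter (fun j => lam < Q j ω)).card : ℝ) := by
      exact_mod_cast Finset.card_le_card
        (Finset.filter_subset_filter _ (Finset.subset_univ _))
    have hdiv : α * (1-lam) / (1 + ((Finset.univ.filter (fun j => lam < Q j ω)).card : ℝ))
        ≤ α * (1-lam) / (1 + (((N.erase i).filter (fun j => lam < Q j ω)).card : ℝ)) := by
      gcongr
    rw [hcard] at hle
    exact le_trans hle (min_le_min le_rfl hdiv)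
  calc μ {ω | ∃ i ∈ N, Q i ω ≤
        min lam (α * (1 - lam) / (1 + (Nat.card {j : Fin n // lam < Q j ω} : ℝ)))}
      ≤ μ (⋃ i ∈ N, {ω | Q i ω ≤ min lam (α * (1-lam) /
          (1 + (((N.erase i).filter (fun j => lam < Q j ω)).card : ℝ)))}) :=
        measure_mono hEsub
    _ ≤ ∑ i ∈ N, μ {ω | Q i ω ≤ min lam (α * (1-lam) /
          (1 + (((N.erase i).filter (fun j => lam < Q j ω)).card : ℝ)))} :=
        measure_biUnion_finset_le _ _
    _ ≤ ∑ i ∈ N, ENNReal.ofReal α * ∑ k ∈ Finset.range (n+1),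
          μ ((fun ω => (N.filter (fun j => lam < Q j ω)).card) ⁻¹' {k+1}
            ∩ Q i ⁻¹' Set.Ioi lam) * ENNReal.ofReal (1/(1+(k:ℝ))) :=
        Finset.sum_le_sum fun i hiN =>
          plugin_key_i μ Q hQm hiid N hunif lam α hl0 hl1 ha0 i hiN
    _ = ENNReal.ofReal α * ∑ i ∈ N, ∑ k ∈ Finset.range (n+1),
          μ ((fun ω => (N.filter (fun j => lam < Q j ω)).card) ⁻¹' {k+1}
            ∩ Q i ⁻¹' Set.Ioi lam) * ENNReal.ofReal (1/(1+(k:ℝ))) := by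
        rw [Finset.mul_sum]
    _ = ENNReal.ofReal α * ∑ k ∈ Finset.range (n+1), ∑ i ∈ N,
          μ ((fun ω => (N.filter (fun j => lam < Q j ω)).card) ⁻¹' {k+1}
            ∩ Q i ⁻¹' Set.Ioi lam) * ENNReal.ofReal (1/(1+(k:ℝ))) := by
        rw [Finset.sum_comm]
    _ = ENNReal.ofReal α * ∑ k ∈ Finset.range (n+1),
          μ ((fun ω => (N.filter (fun j => lam < Q j ω)).card) ⁻¹' {k+1}) := by
        congr 1
        refine Finset.sum_congr rfl fun k _ => ?_
        rw [← Finset.sum_mul, plugin_count_sum μ Q hQm lam N (k+1)]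
        have hw : ENNReal.ofReal (1/(1+(k:ℝ))) = (((k+1 : ℕ) : ℝ≥0∞))⁻¹ := by
          rw [one_div, ENNReal.ofReal_inv_of_pos (by positivity)]
          congr 1
          rw [show (1 + (k:ℝ)) = ((k+1 : ℕ) : ℝ) by push_cast; ring, ENNReal.ofReal_natCast]
        rw [hw, mul_comm ((k+1 : ℕ) : ℝ≥0∞), mul_assoc, ENNReal.mul_inv_cancel
          (Nat.cast_ne_zero.2 k.succ_ne_zero)
          (ENNReal.natCast_ne_top _), mul_one]
    _ ≤ ENNReal.ofReal α * 1 := by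
        gcongr
        have hdisj : (Finset.range (n+1) : Set ℕ).PairwiseDisjoint
            (fun k => (fun ω => (N.filter (fun j => lam < Q j ω)).card) ⁻¹' {k+1}) := by
          intro a _ b _ hab
          exact Set.disjoint_left.2 fun ω ha hb => hab (by
            have h1 : (N.filter (fun j => lam < Q j ω)).card = a + 1 := ha
            have h2 : (N.filter (fun j => lam < Q j ω)).card = b + 1 := hb
            omega)
        rw [← measure_biUnion_finset hdisj
          (fun k _ => (plugin_meas_card Q hQm lam N) (measurableSet_singleton (k+1)))]
        exact (measure_mono (Set.subset_univ _)).trans (by simp)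
    _ = ENNReal.ofReal α := mul_one _
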